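/- For integers n ≥ 1, the number of nonempty subsets E of {1,...,n} with n ∉ E and min E > |E| equals ∑_{k=1}^{n-1} ∑_{j=0}^{k-2} C(n-k-1, j), and this double sum equals F_n - 1. -/

import Mathlib

open Finset

-- hockey stick, range form
lemma hockey (N r : ℕ) : ∑ i ∈ range N, Nat.choose i r = Nat.choose N (r+1) := by
  induction N with
  | zero => simp
  | succ N ih => rw [sum_range_succ, ih, Nat.choose_succ_succ]; ring

-- diagonal fibonacci sum
lemma fibsum (m : ℕ) : ∑ c ∈ range (m+1), Nat.choose (m - c) c = Nat.fib (m+1) := by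
  induction m using Nat.twoStepInduction with
  | zero => simp
  | one => decide
  | more m ih1 ih2 =>
    rw [sum_range_succ' (fun c => Nat.choose (m + 2 - c) c)]
    have h1 : ∑ c ∈ range (m+2), Nat.choose (m + 2 - (c+1)) (c+1)
        = ∑ c ∈ range (m+1), Nat.choose (m + 1 - c) (c+1) := by
      rw [sum_range_succ]
      have : m + 2 - (m + 1 + 1) = 0 := by omega
      rw [this, Nat.choose_eq_zero_of_lt (by omega), add_zero]
      refine Finset.sum_congr rfl fun c hc => ?_
      congr 1; omega
    have h2 : ∑ c ∈ range (m+1), Nat.choose (m + 1 - c) (c+1)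
        = (∑ c ∈ range (m+1), Nat.choose (m - c) c)
          + ∑ c ∈ range (m+1), Nat.choose (m - c) (c+1) := by
      rw [← Finset.sum_add_distrib]
      refine Finset.sum_congr rfl fun c hc => ?_
      simp only [mem_range] at hc
      have : m + 1 - c = (m - c) + 1 := by omega
      rw [this, Nat.choose_succ_succ]
    have h3 : ∑ c ∈ range (m+2), Nat.choose (m + 1 - c) c
        = ∑ c ∈ range (m+1), Nat.choose (m - c) (c+1) + 1 := by
      rw [sum_range_succ' (fun c => Nat.choose (m + 1 - c) c)]
      simp only [Nat.sub_zero, Nat.choose_zero_right]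
      congr 1
      refine Finset.sum_congr rfl fun c hc => ?_
      congr 1; omega
    rw [h1, h2, Nat.fib_add_two, ← ih1, ← ih2, h3]
    simp only [Nat.sub_zero, Nat.choose_zero_right]
    ring

-- Part B
lemma partB (n : ℕ) (hn : 1 ≤ n) :
    (∑ k ∈ Finset.Icc 1 (n - 1), ∑ j ∈ Finset.range (k - 1),
          Nat.choose (n - k - 1) j) = Nat.fib n - 1 := by
  -- rewrite inner ranges via a common product, swap order
  have swap : (∑ k ∈ Finset.Icc 1 (n - 1), ∑ j ∈ Finset.range (k - 1),
          Nat.choose (n - k - 1) j)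
      = ∑ j ∈ range (n-1), ∑ k ∈ Finset.Icc (j+2) (n-1), Nat.choose (n - k - 1) j := by
    have L : ∀ k ∈ Finset.Icc 1 (n-1),
        (∑ j ∈ Finset.range (k - 1), Nat.choose (n - k - 1) j)
        = ∑ j ∈ range (n-1), if j + 2 ≤ k then Nat.choose (n - k - 1) j else 0 := by
      intro k hk
      simp only [mem_Icc] at hk
      have hf : Finset.filter (fun j => j + 2 ≤ k) (range (n-1)) = range (k-1) := by
        ext j; simp only [mem_filter, mem_range]; omega
      rw [← hf, Finset.sum_filter]
    rw [Finset.sum_congr rfl L, Finset.sum_comm]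
    refine Finset.sum_congr rfl fun j hj => ?_
    have hf : Finset.filter (fun k => j + 2 ≤ k) (Finset.Icc 1 (n-1)) = Finset.Icc (j+2) (n-1) := by
      ext k; simp only [mem_filter, mem_Icc]; omega
    rw [← hf, Finset.sum_filter]
  rw [swap]
  have inner : ∀ j ∈ range (n-1),
      (∑ k ∈ Finset.Icc (j+2) (n-1), Nat.choose (n - k - 1) j)
      = Nat.choose (n - 2 - j) (j+1) := by
    intro j hj
    simp only [mem_range] at hj
    rw [← Finset.Ico_add_one_right_eq_Icc, Finset.sum_Ico_eq_sum_range]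
    have hN : n - 1 + 1 - (j + 2) = n - 2 - j + (0:ℕ) := by omega
    rcases le_or_gt (j+2) (n-1) with h | h
    · have : (n - 1 + 1 - (j + 2)) = n - 2 - j := by omega
      rw [this, ← hockey (n-2-j) j, ← Finset.sum_range_reflect]
      refine Finset.sum_congr rfl fun i hi => ?_
      simp only [mem_range] at hi
      congr 1
      omega
    · have : (n - 1 + 1 - (j + 2)) = 0 := by omega
      rw [this]
      simp [Nat.choose_eq_zero_of_lt (show n - 2 - j < j + 1 by omega)]
  rw [Finset.sum_congr rfl inner]
  -- relate to fibsum (n-1)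
  obtain ⟨m, rfl⟩ : ∃ m, n = m + 1 := ⟨n - 1, by omega⟩
  have := fibsum m
  rw [sum_range_succ' (fun c => Nat.choose (m - c) c)] at this
  simp only [Nat.sub_zero, Nat.choose_zero_right, Nat.add_sub_cancel] at this ⊢
  have e : ∑ j ∈ range m, Nat.choose (m + 1 - 2 - j) (j + 1)
      = ∑ j ∈ range m, Nat.choose (m - (j+1)) (j+1) := by
    refine Finset.sum_congr rfl fun j hj => ?_
    congr 1; omega
  rw [e]
  omega

lemma partA (n : ℕ) (hn : 1 ≤ n) :
    {E : Finset ℕ | E ⊆ Finset.Icc 1 n ∧ E ≠ ∅ ∧ n ∉ E ∧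
        ∃ h : E.Nonempty, E.card < E.min' h}.ncard = Nat.fib n - 1 := by
  classical
  have hset : {E : Finset ℕ | E ⊆ Finset.Icc 1 n ∧ E ≠ ∅ ∧ n ∉ E ∧
        ∃ h : E.Nonempty, E.card < E.min' h}
      = ↑((Finset.Icc 1 (n-1)).powerset.filter
          (fun E => E.Nonempty ∧ ∀ x ∈ E, E.card < x)) := by
    ext E
    simp only [Set.mem_setOf_eq, Finset.coe_filter, Finset.mem_powerset]
    constructor
    · rintro ⟨hsub, hne, hnmem, h, hmin⟩
      refine ⟨fun x hx => ?_, h, fun x hx => lt_of_lt_of_le hmin (Finset.min'_le E x hx)⟩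
      have h1 := Finset.mem_Icc.mp (hsub hx)
      have h2 : x ≠ n := fun he => hnmem (he ▸ hx)
      exact Finset.mem_Icc.mpr ⟨h1.1, by omega⟩
    · rintro ⟨hsub, hne, hall⟩
      refine ⟨fun x hx => ?_, Finset.nonempty_iff_ne_empty.mp hne, fun hmem => ?_,
        hne, hall _ (Finset.min'_mem E hne)⟩
      · have h1 := Finset.mem_Icc.mp (hsub hx)
        exact Finset.mem_Icc.mpr ⟨h1.1, by omega⟩
      · have h1 := Finset.mem_Icc.mp (hsub hmem)
        omega
  rw [hset, Set.ncard_coe_finset]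
  have hbi : (Finset.Icc 1 (n-1)).powerset.filter
          (fun E => E.Nonempty ∧ ∀ x ∈ E, E.card < x)
      = (Finset.Icc 1 (n-1)).biUnion
          (fun c => (Finset.Icc (c+1) (n-1)).powersetCard c) := by
    ext E
    simp only [Finset.mem_filter, Finset.mem_powerset, Finset.mem_biUnion,
      Finset.mem_powersetCard, Finset.mem_Icc]
    constructor
    · rintro ⟨hsub, ⟨x, hx⟩, hall⟩
      refine ⟨E.card, ⟨Finset.card_pos.mpr ⟨x, hx⟩, ?_⟩,
        fun y hy => Finset.mem_Icc.mpr ⟨?_, ?_⟩, rfl⟩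
      · have := hall x hx
        have := (Finset.mem_Icc.mp (hsub hx)).2
        omega
      · have := hall y hy; omega
      · exact (Finset.mem_Icc.mp (hsub hy)).2
    · rintro ⟨c, ⟨hc1, hc2⟩, hsub, hcard⟩
      refine ⟨fun y hy => ?_, Finset.card_pos.mp (by omega), fun y hy => ?_⟩
      · have := Finset.mem_Icc.mp (hsub hy)
        exact Finset.mem_Icc.mpr ⟨by omega, this.2⟩
      · have := (Finset.mem_Icc.mp (hsub hy)).1
        omega
  rw [hbi, Finset.card_biUnion]
  · simp only [Finset.card_powersetCard, Nat.card_Icc]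
    obtain ⟨m, rfl⟩ : ∃ m, n = m + 1 := ⟨n - 1, by omega⟩
    simp only [Nat.add_sub_cancel]
    rw [← Finset.Ico_add_one_right_eq_Icc, Finset.sum_Ico_eq_sum_range]
    have := fibsum m
    rw [sum_range_succ' (fun c => Nat.choose (m - c) c)] at this
    simp only [Nat.sub_zero, Nat.choose_zero_right] at this
    have e : ∑ i ∈ range (m + 1 - 1), Nat.choose (m + 1 - (1 + i + 1)) (1 + i)
        = ∑ i ∈ range m, Nat.choose (m - (i + 1)) (i + 1) := by
      refine Finset.sum_congr (by congr 1) fun i hi => ?_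
      congr 1 <;> omega
    rw [e]
    omega
  · intro c _ c' _ hne
    rw [Function.onFun, Finset.disjoint_left]
    intro E h1 h2
    exact hne (((Finset.mem_powersetCard.mp h1).2.symm).trans
      (Finset.mem_powersetCard.mp h2).2)

theorem stmt11 (n : ℕ) (hn : 1 ≤ n) :
    {E : Finset ℕ | E ⊆ Finset.Icc 1 n ∧ E ≠ ∅ ∧ n ∉ E ∧
        ∃ h : E.Nonempty, E.card < E.min' h}.ncard
      = ∑ k ∈ Finset.Icc 1 (n - 1), ∑ j ∈ Finset.range (k - 1),
          Nat.choose (n - k - 1) j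
    ∧ (∑ k ∈ Finset.Icc 1 (n - 1), ∑ j ∈ Finset.range (k - 1),
          Nat.choose (n - k - 1) j) = Nat.fib n - 1 :=
  ⟨(partA n hn).trans (partB n hn).symm, partB n hn⟩
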